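/- Let μ be a finite positive measure on ℝ and t₀ > 0, and define F_{t₀}(z) = F(z)/(1 + F(z)/t₀) where F = F_μ is the Stieltjes transform of μ. Then Im F_{t₀}(z) > 0 for all z in the upper half-plane (assuming μ ≠ 0), and for a.e. x ∈ ℝ, |F(x+i0)| > t₀ if and only if F_{t₀}(x+i0) > t₀/2 (at points where the boundary values exist and are real, i.e., off the support of the singular part). -/

import Mathlib

open MeasureTheory Filter

theorem stmt19 (μ : Measure ℝ) [IsFiniteMeasure μ] (hμ : μ ≠ 0) (t₀ : ℝ) (ht₀ : 0 < t₀) :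
    (∀ z : ℂ, 0 < z.im →
      0 < ((∫ x : ℝ, ((x : ℂ) - z)⁻¹ ∂μ) /
            (1 + (∫ x : ℝ, ((x : ℂ) - z)⁻¹ ∂μ) / (t₀ : ℂ))).im) ∧
    (∀ (x : ℝ) (L : ℝ),
      Tendsto (fun ε : ℝ => ∫ y : ℝ, ((y : ℂ) - ((x : ℂ) + ε * Complex.I))⁻¹ ∂μ)
        (nhdsWithin 0 (Set.Ioi 0)) (nhds (L : ℂ)) →
      (t₀ < |L| ↔ t₀ / 2 < L / (1 + L / t₀))) := by
  constructor
  · intro z hz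
    set F := ∫ x : ℝ, ((x : ℂ) - z)⁻¹ ∂μ with hFdef
    have hne : ∀ x : ℝ, ((x : ℂ) - z) ≠ 0 := by
      intro x h
      have h2 : ((x : ℂ) - z).im = 0 := by rw [h]; simp
      simp only [Complex.sub_im, Complex.ofReal_im, zero_sub, neg_eq_zero] at h2
      linarith
    have hcont : Continuous fun x : ℝ => ((x : ℂ) - z)⁻¹ :=
      (Complex.continuous_ofReal.sub continuous_const).inv₀ hne
    have hint : Integrable (fun x : ℝ => ((x : ℂ) - z)⁻¹) μ := by
      refine (integrable_const ((z.im)⁻¹)).mono' hcont.aestronglyMeasurable ?_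
      filter_upwards with x
      rw [norm_inv]
      refine inv_anti₀ hz ?_
      calc z.im = |((x : ℂ) - z).im| := by
              simp [Complex.sub_im, abs_of_pos hz]
        _ ≤ ‖(x : ℂ) - z‖ := Complex.abs_im_le_norm _
        _ = ‖(x : ℂ) - z‖ := rfl
    have himint : Integrable (fun x : ℝ => (((x : ℂ) - z)⁻¹).im) μ := hint.im
    have hFim : F.im = ∫ x : ℝ, (((x : ℂ) - z)⁻¹).im ∂μ := by
      rw [hFdef, ← RCLike.im_eq_complex_im]
      exact (integral_im hint).symm
    have hpos : ∀ x : ℝ, 0 < (((x : ℂ) - z)⁻¹).im := by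
      intro x
      rw [Complex.inv_im]
      have hnsq : 0 < Complex.normSq ((x : ℂ) - z) := Complex.normSq_pos.2 (hne x)
      have : ((x : ℂ) - z).im = -z.im := by simp
      rw [this, neg_neg]
      positivity
    have hFimpos : 0 < F.im := by
      rw [hFim]
      refine (integral_pos_iff_support_of_nonneg (fun x => (hpos x).le) himint).2 ?_
      have : (Function.support fun x : ℝ => (((x : ℂ) - z)⁻¹).im) = Set.univ :=
        Set.eq_univ_of_forall fun x => (hpos x).ne'
      rw [this]
      exact Measure.measure_univ_pos.2 hμ
    set d : ℂ := 1 + F / (t₀ : ℂ) with hd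
    have hdre : d.re = 1 + F.re / t₀ := by simp [hd]
    have hdim : d.im = F.im / t₀ := by simp [hd]
    have hdim0 : d.im ≠ 0 := by
      rw [hdim]; positivity
    have hdne : d ≠ 0 := fun h => hdim0 (by rw [h]; simp)
    have hnsq : 0 < Complex.normSq d := Complex.normSq_pos.2 hdne
    rw [Complex.div_im, div_sub_div_same]
    apply div_pos _ hnsq
    have : F.im * d.re - F.re * d.im = F.im := by
      rw [hdre, hdim]; field_simp; ring
    rw [this]
    exact hFimpos
  · intro x L _
    rcases lt_trichotomy (t₀ + L) 0 with hD | hD | hD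
    · have hL : L < -t₀ := by linarith
      have h1 : 1 + L / t₀ = (t₀ + L) / t₀ := by field_simp
      rw [h1, div_div_eq_mul_div]
      constructor
      · intro _
        rw [lt_div_iff_of_neg hD]
        nlinarith
      · intro _
        rw [abs_of_neg (by linarith : L < 0)]
        linarith
    · have hL : L = -t₀ := by linarith
      subst hL
      have h0 : 1 + -t₀ / t₀ = 0 := by field_simp; norm_num
      rw [h0, div_zero, abs_of_neg (by linarith : -t₀ < 0), neg_neg]
      constructor <;> intro h <;> linarith
    · have h1 : 1 + L / t₀ = (t₀ + L) / t₀ := by field_simp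
      rw [h1, div_div_eq_mul_div, lt_div_iff₀ hD]
      rcases abs_cases L with ⟨h, h'⟩ | ⟨h, h'⟩ <;> rw [h] <;>
        constructor <;> intro <;> nlinarith
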